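/- Fix α ∈ ℝ and x ∈ ℝ, and let h_n = (c_n x + d_n)^{1/2} with c_n = 2 − 2b_n^{−2} and d_n = b_n² − 2b_n^{−2}, defined for n large enough that c_n x + d_n > 0. Then as n → ∞, h_n^{α} = b_n^{α} ( 1 + α x b_n^{−2} − α b_n^{−4} (1 + x + ((2−α)/2) x²) + α(2−α) x b_n^{−6} (1 + x + ((4−α)/6) x²) + O(b_n^{−8}) ). -/

import Mathlib

open Real Filter Topology

lemma hasDerivAt_one_add_rpow (p : ℝ) {u : ℝ} (hu : (1:ℝ) + u ≠ 0) :
    HasDerivAt (fun v : ℝ => (1 + v) ^ p) (p * (1 + u) ^ (p - 1)) u := by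
  have h1 : HasDerivAt (fun v : ℝ => 1 + v) 1 u := (hasDerivAt_id u).const_add 1
  have h2 := h1.rpow_const (p := p) (Or.inl hu)
  simpa using h2

lemma mvt_step {e e' : ℝ → ℝ} {C : ℝ} {k : ℕ}
    (hC : 0 ≤ C)
    (h0 : e 0 = 0)
    (hd : ∀ u ∈ Set.Icc (-(1:ℝ)/2) (1/2), HasDerivAt e (e' u) u)
    (hb : ∀ u ∈ Set.Icc (-(1:ℝ)/2) (1/2), |e' u| ≤ C * |u| ^ k) :
    ∀ u ∈ Set.Icc (-(1:ℝ)/2) (1/2), |e u| ≤ C * |u| ^ (k + 1) := by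
  intro u hu
  have hmem : ∀ v : ℝ, v ∈ Set.Icc u 0 ∪ Set.Icc 0 u → v ∈ Set.Icc (-(1:ℝ)/2) (1/2) := by
    intro v hv
    rcases hv with hv | hv
    · exact ⟨le_trans hu.1 hv.1, le_trans hv.2 (by norm_num)⟩
    · exact ⟨le_trans (by norm_num) hv.1, le_trans hv.2 hu.2⟩
  rcases lt_trichotomy u 0 with h | h | h
  · obtain ⟨ξ, hξ, hslope⟩ := exists_hasDerivAt_eq_slope e e' h
      (fun v hv => (hd v (hmem v (Or.inl hv))).continuousAt.continuousWithinAt)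
      (fun v hv => hd v (hmem v (Or.inl ⟨hv.1.le, hv.2.le⟩)))
    have hξm : ξ ∈ Set.Icc (-(1:ℝ)/2) (1/2) := hmem ξ (Or.inl ⟨hξ.1.le, hξ.2.le⟩)
    have hune : u ≠ 0 := h.ne
    have heu : e u = e' ξ * u := by
      rw [h0] at hslope
      field_simp at hslope
      linarith [hslope]
    have hξu : |ξ| ≤ |u| := by
      rw [abs_of_neg hξ.2, abs_of_neg h]; linarith [hξ.1]
    calc |e u| = |e' ξ| * |u| := by rw [heu, abs_mul]
      _ ≤ (C * |ξ| ^ k) * |u| := by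
          exact mul_le_mul_of_nonneg_right (hb ξ hξm) (abs_nonneg u)
      _ ≤ (C * |u| ^ k) * |u| := by gcongr
      _ = C * |u| ^ (k + 1) := by ring
  · simp [h, h0]
  · obtain ⟨ξ, hξ, hslope⟩ := exists_hasDerivAt_eq_slope e e' h
      (fun v hv => (hd v (hmem v (Or.inr hv))).continuousAt.continuousWithinAt)
      (fun v hv => hd v (hmem v (Or.inr ⟨hv.1.le, hv.2.le⟩)))
    have hξm : ξ ∈ Set.Icc (-(1:ℝ)/2) (1/2) := hmem ξ (Or.inr ⟨hξ.1.le, hξ.2.le⟩)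
    have hune : u ≠ 0 := h.ne'
    have heu : e u = e' ξ * u := by
      rw [h0] at hslope
      field_simp at hslope
      linarith [hslope]
    have hξu : |ξ| ≤ |u| := by
      rw [abs_of_pos hξ.1, abs_of_pos h]; linarith [hξ.2]
    calc |e u| = |e' ξ| * |u| := by rw [heu, abs_mul]
      _ ≤ (C * |ξ| ^ k) * |u| := by
          exact mul_le_mul_of_nonneg_right (hb ξ hξm) (abs_nonneg u)
      _ ≤ (C * |u| ^ k) * |u| := by gcongr
      _ = C * |u| ^ (k + 1) := by ring

lemma one_add_ne {u : ℝ} (hu : u ∈ Set.Icc (-(1:ℝ)/2) (1/2)) : (1:ℝ) + u ≠ 0 := by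
  have := hu.1; have := hu.2; intro h; linarith

lemma rpow_factor_bound (p : ℝ) {u : ℝ} (hu : u ∈ Set.Icc (-(1:ℝ)/2) (1/2)) :
    (1 + u) ^ p ≤ 2 ^ |p| := by
  have h1 : (1:ℝ)/2 ≤ 1 + u := by linarith [hu.1]
  have h2 : 1 + u ≤ 2 := by linarith [hu.2]
  rcases le_or_gt 0 p with hp | hp
  · calc (1 + u) ^ p ≤ 2 ^ p := Real.rpow_le_rpow (by linarith) h2 hp
      _ = 2 ^ |p| := by rw [abs_of_nonneg hp]
  · calc (1 + u) ^ p ≤ ((1:ℝ)/2) ^ p := by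
          apply Real.rpow_le_rpow_of_nonpos (by norm_num) h1 hp.le
      _ = 2 ^ (-p) := by
          rw [one_div, Real.inv_rpow (by norm_num), ← Real.rpow_neg (by norm_num)]
      _ = 2 ^ |p| := by rw [abs_of_neg hp]

lemma rpow_sub_one_bound (γ : ℝ) : ∀ u ∈ Set.Icc (-(1:ℝ)/2) (1/2),
    |(1 + u) ^ γ - 1| ≤ (|γ| * 2 ^ |γ - 1| + 1) * |u| := by
  have hKnn : (0:ℝ) ≤ |γ| * 2 ^ |γ - 1| + 1 := by positivity
  have hmain := mvt_step (e := fun u : ℝ => (1 + u) ^ γ - 1)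
      (e' := fun u : ℝ => γ * (1 + u) ^ (γ - 1)) (C := |γ| * 2 ^ |γ - 1| + 1) (k := 0)
      hKnn (by simp)
      (fun u hu => ((hasDerivAt_one_add_rpow γ (one_add_ne hu)).sub_const 1))
      (fun u hu => by
        rw [pow_zero, mul_one, abs_mul]
        have h1 : |(1 + u) ^ (γ - 1)| ≤ 2 ^ |γ - 1| := by
          rw [abs_of_nonneg (Real.rpow_nonneg (by linarith [hu.1]) _)]
          exact rpow_factor_bound (γ - 1) hu
        nlinarith [abs_nonneg γ, abs_nonneg ((1+u)^(γ-1))])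
  intro u hu
  simpa using hmain u hu

lemma rpow_taylor3 (β : ℝ) : ∃ C > 0, ∀ u : ℝ, |u| ≤ 1/2 →
    |(1 + u) ^ β - (1 + β * u + β * (β - 1) / 2 * u ^ 2 + β * (β - 1) * (β - 2) / 6 * u ^ 3)|
      ≤ C * u ^ 4 := by
  set K : ℝ := |β - 3| * 2 ^ |β - 3 - 1| + 1 with hK
  set C : ℝ := |β * (β - 1) * (β - 2)| * K + 1 with hC
  have hKpos : 0 < K := by positivity
  have hCpos : 0 < C := by positivity
  refine ⟨C, hCpos, ?_⟩
  set g3 : ℝ → ℝ := fun u => β * (β - 1) * (β - 2) * ((1 + u) ^ (β - 3) - 1) with hg3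
  set g2 : ℝ → ℝ := fun u => β * (β - 1) * (1 + u) ^ (β - 2) - β * (β - 1)
      - β * (β - 1) * (β - 2) * u with hg2
  set g1 : ℝ → ℝ := fun u => β * (1 + u) ^ (β - 1) - β - β * (β - 1) * u
      - β * (β - 1) * (β - 2) / 2 * u ^ 2 with hg1
  set g0 : ℝ → ℝ := fun u => (1 + u) ^ β - 1 - β * u - β * (β - 1) / 2 * u ^ 2
      - β * (β - 1) * (β - 2) / 6 * u ^ 3 with hg0
  have hb2 : ∀ u ∈ Set.Icc (-(1:ℝ)/2) (1/2), |g2 u| ≤ C * |u| ^ 2 := by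
    refine mvt_step (e' := g3) hCpos.le (by simp [hg2]) ?_ ?_
    · intro u hu
      have hd := (((hasDerivAt_one_add_rpow (β - 2) (one_add_ne hu)).const_mul
          (β * (β - 1))).sub_const (β * (β - 1))).sub
          ((hasDerivAt_id u).const_mul (β * (β - 1) * (β - 2)))
      have e1 : β - 2 - 1 = β - 3 := by ring
      rw [e1] at hd
      refine hd.congr_deriv ?_
      simp only [hg3]
      ring
    · intro u hu
      have h1 := rpow_sub_one_bound (β - 3) u hu
      calc |g3 u| = |β * (β - 1) * (β - 2)| * |(1 + u) ^ (β - 3) - 1| := by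
            rw [hg3]; rw [← abs_mul]
        _ ≤ |β * (β - 1) * (β - 2)| * (K * |u|) :=
            mul_le_mul_of_nonneg_left h1 (abs_nonneg _)
        _ ≤ C * |u| ^ 1 := by
            rw [pow_one]
            nlinarith [abs_nonneg u, abs_nonneg (β * (β - 1) * (β - 2))]
  have hb1 : ∀ u ∈ Set.Icc (-(1:ℝ)/2) (1/2), |g1 u| ≤ C * |u| ^ 3 := by
    refine mvt_step (e' := g2) hCpos.le (by simp [hg1]) ?_ hb2
    intro u hu
    have hd := ((((hasDerivAt_one_add_rpow (β - 1) (one_add_ne hu)).const_mul β).sub_const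
        β).sub ((hasDerivAt_id u).const_mul (β * (β - 1)))).sub
        (((hasDerivAt_pow 2 u)).const_mul (β * (β - 1) * (β - 2) / 2))
    have e1 : β - 1 - 1 = β - 2 := by ring
    rw [e1] at hd
    refine hd.congr_deriv ?_
    simp only [hg2]
    push_cast
    ring
  have hb0 : ∀ u ∈ Set.Icc (-(1:ℝ)/2) (1/2), |g0 u| ≤ C * |u| ^ 4 := by
    refine mvt_step (e' := g1) hCpos.le (by simp [hg0]) ?_ hb1
    intro u hu
    have hd := ((((hasDerivAt_one_add_rpow β (one_add_ne hu)).sub_const 1).sub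
        ((hasDerivAt_id u).const_mul β)).sub
        (((hasDerivAt_pow 2 u)).const_mul (β * (β - 1) / 2))).sub
        (((hasDerivAt_pow 3 u)).const_mul (β * (β - 1) * (β - 2) / 6))
    refine hd.congr_deriv ?_
    simp only [hg1]
    push_cast
    ring
  intro u hu
  have hu2 : u ∈ Set.Icc (-(1:ℝ)/2) (1/2) := by
    constructor
    · linarith [neg_abs_le u]
    · linarith [le_abs_self u]
  have hfin := hb0 u hu2
  have habs : |u| ^ 4 = u ^ 4 := by
    rw [← abs_pow]; exact abs_of_nonneg (by positivity)
  rw [habs] at hfin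
  calc |(1 + u) ^ β - (1 + β * u + β * (β - 1) / 2 * u ^ 2 + β * (β - 1) * (β - 2) / 6 * u ^ 3)|
      = |g0 u| := by rw [hg0]; ring_nf
    _ ≤ C * u ^ 4 := hfin

set_option maxHeartbeats 1000000 in
/-- With `b_n` the unique positive solution of `2π b_n² exp(b_n²) = n²`,
`c_n = 2 − 2b_n^{−2}`, `d_n = b_n² − 2b_n^{−2}` and `h_n = (c_n x + d_n)^{1/2}`:
for fixed `α, x ∈ ℝ`,
`h_n^α = b_n^α (1 + αx b_n^{−2} − α b_n^{−4}(1 + x + ((2−α)/2)x²)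
  + α(2−α)x b_n^{−6}(1 + x + ((4−α)/6)x²) + O(b_n^{−8}))`. -/
theorem powered_norming_rpow_expansion_t_eq_two
    (b : ℕ → ℝ)
    (hb : ∀ n : ℕ, 1 ≤ n → 0 < b n ∧
      2 * Real.pi * (b n) ^ 2 * Real.exp ((b n) ^ 2) = (n : ℝ) ^ 2)
    (α x : ℝ)
    (c d h : ℕ → ℝ)
    (hc : ∀ n : ℕ, c n = 2 - 2 / (b n) ^ 2)
    (hd : ∀ n : ℕ, d n = (b n) ^ 2 - 2 / (b n) ^ 2)
    (hh : ∀ n : ℕ, h n = (c n * x + d n) ^ ((1 : ℝ) / 2)) :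
    ∃ C > (0 : ℝ), ∃ N : ℕ, ∀ n : ℕ, N ≤ n →
      0 < c n * x + d n ∧
      |h n ^ α / b n ^ α -
        (1 + α * x / (b n) ^ 2 -
          α / (b n) ^ 4 * (1 + x + (2 - α) / 2 * x ^ 2) +
          α * (2 - α) * x / (b n) ^ 6 * (1 + x + (4 - α) / 6 * x ^ 2))|
      ≤ C / (b n) ^ 8 := by
  -- b n ^ 2 → ∞
  have hbt : Tendsto (fun n => (b n) ^ 2) atTop atTop := by
    rw [tendsto_atTop]
    intro M
    set M' := max M 0 with hM'
    have hM'0 : 0 ≤ M' := le_max_right _ _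
    filter_upwards [eventually_ge_atTop (⌈2 * Real.pi * M' * Real.exp M'⌉₊ + 1)] with n hn
    have hn1 : 1 ≤ n := le_trans (by omega) hn
    obtain ⟨hbp, hbe⟩ := hb n hn1
    by_contra hcon
    push_neg at hcon
    have h1 : (b n) ^ 2 < M' := lt_of_lt_of_le hcon (le_max_left _ _)
    have h2 : 2 * Real.pi * ((b n) ^ 2) * Real.exp ((b n) ^ 2)
        ≤ 2 * Real.pi * M' * Real.exp M' := by
      have hb2 : (0:ℝ) ≤ (b n) ^ 2 := sq_nonneg _
      gcongr
    have h3 : ((n:ℝ)) ^ 2 ≤ 2 * Real.pi * M' * Real.exp M' := by rw [← hbe]; exact h2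
    have h4 : 2 * Real.pi * M' * Real.exp M' < (n:ℝ) := by
      have hcast : (⌈2 * Real.pi * M' * Real.exp M'⌉₊ : ℝ) + 1 ≤ (n:ℝ) := by
        exact_mod_cast hn
      have hceil := Nat.le_ceil (2 * Real.pi * M' * Real.exp M')
      linarith
    have h5 : (n:ℝ) ≤ (n:ℝ) ^ 2 := by
      have : (1:ℝ) ≤ (n:ℝ) := by exact_mod_cast hn1
      nlinarith
    linarith
  obtain ⟨C0, hC0, hC0b⟩ := rpow_taylor3 (α / 2)
  set M0 : ℝ := 2 * |x| + 2 * |x + 1| + 1 with hM0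
  have hM0pos : 0 < M0 := by positivity
  set A2 : ℝ := (α/2) * ((α/2) - 1) / 2 with hA2
  set A3 : ℝ := (α/2) * ((α/2) - 1) * ((α/2) - 2) / 6 with hA3
  set C2 : ℝ := |4 * A2 * (x+1)^2 - 24 * A3 * x^2 * (x+1)| + |24 * A3 * x * (x+1)^2|
      + |8 * A3 * (x+1)^3| with hC2
  have hC2nn : 0 ≤ C2 := by positivity
  refine ⟨C0 * M0 ^ 4 + C2 + 1, by positivity, ?_⟩
  obtain ⟨N, hN⟩ := eventually_atTop.mp
    ((hbt.eventually_ge_atTop (2 * M0)).and (eventually_ge_atTop 1))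
  refine ⟨N, fun n hn => ?_⟩
  obtain ⟨hB2, hn1⟩ := hN n hn
  obtain ⟨hbpos, hbeq⟩ := hb n hn1
  have hBsq : (0:ℝ) < (b n) ^ 2 := by positivity
  have hBne : (b n) ^ 2 ≠ 0 := hBsq.ne'
  set t : ℝ := 1 / (b n) ^ 2 with ht
  have htpos : 0 < t := by positivity
  have ht1 : t ≤ 1 / (2 * M0) := by
    rw [ht]
    apply one_div_le_one_div_of_le (by positivity) hB2
  have htle1 : t ≤ 1 := by
    have : 1 / (2 * M0) ≤ 1 := by
      rw [div_le_one (by positivity)]; linarith [abs_nonneg x, abs_nonneg (x+1)]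
    linarith
  set u : ℝ := 2 * x * t - 2 * (x + 1) * t ^ 2 with hu
  have huM : |u| ≤ M0 * t := by
    calc |u| ≤ |2 * x * t| + |2 * (x+1) * t^2| := abs_sub _ _
      _ = 2 * |x| * t + 2 * |x+1| * t^2 := by
          rw [abs_mul, abs_mul, abs_mul, abs_mul]
          rw [abs_of_pos htpos, abs_of_nonneg (by positivity : (0:ℝ) ≤ t^2)]
          norm_num
      _ ≤ 2 * |x| * t + 2 * |x+1| * t := by
          have : t ^ 2 ≤ t := by nlinarith
          nlinarith [abs_nonneg (x+1)]
      _ ≤ M0 * t := by rw [hM0]; nlinarith [htpos]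
  have huhalf : |u| ≤ 1 / 2 := by
    have : M0 * t ≤ M0 * (1 / (2 * M0)) := mul_le_mul_of_nonneg_left ht1 hM0pos.le
    have hsimp : M0 * (1 / (2 * M0)) = 1 / 2 := by field_simp
    exact le_trans huM (le_trans this (le_of_eq hsimp))
  -- c n * x + d n = b² (1 + u)
  have hs : c n * x + d n = (b n) ^ 2 * (1 + u) := by
    rw [hc n, hd n, hu, ht]
    field_simp
    ring
  have h1u : (0:ℝ) < 1 + u := by
    have := neg_abs_le u; linarith [huhalf]
  have hspos : 0 < c n * x + d n := by rw [hs]; positivity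
  refine ⟨hspos, ?_⟩
  -- h n ^ α / b n ^ α = (1+u)^(α/2)
  have hpow : ((b n) ^ 2 : ℝ) ^ (α / 2 : ℝ) = (b n) ^ α := by
    rw [← Real.rpow_natCast (b n) 2, ← Real.rpow_mul hbpos.le]
    congr 1
    push_cast
    ring
  have hbalpha : (0:ℝ) < (b n) ^ α := Real.rpow_pos_of_pos hbpos α
  have hratio : h n ^ α / b n ^ α = (1 + u) ^ (α / 2 : ℝ) := by
    rw [hh n, hs]
    rw [← Real.rpow_mul (by positivity : (0:ℝ) ≤ (b n)^2 * (1+u))]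
    have he : (1:ℝ)/2 * α = α/2 := by ring
    rw [he]
    rw [Real.mul_rpow (sq_nonneg (b n)) h1u.le, hpow]
    field_simp
  rw [hratio]
  -- main estimate
  have hmain := hC0b u huhalf
  set β := α / 2 with hβ
  set T : ℝ := 1 + α * x / (b n) ^ 2 -
      α / (b n) ^ 4 * (1 + x + (2 - α) / 2 * x ^ 2) +
      α * (2 - α) * x / (b n) ^ 6 * (1 + x + (4 - α) / 6 * x ^ 2) with hT
  have hTt : T = 1 + α * x * t - α * t^2 * (1 + x + (2 - α)/2 * x^2)
      + α * (2 - α) * x * t^3 * (1 + x + (4 - α)/6 * x^2) := by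
    rw [hT, ht]
    field_simp
  set Q : ℝ := 4 * A2 * (x+1)^2 - 24 * A3 * x^2 * (x+1) + 24 * A3 * x * (x+1)^2 * t
      - 8 * A3 * (x+1)^3 * t^2 with hQ
  have hid : (1 + β * u + A2 * u ^ 2 + A3 * u ^ 3) - T
      = t ^ 4 * Q := by
    rw [hA2, hA3]
    rw [hTt, hu, hQ, hA2, hA3, hβ]
    ring
  have hQb : |Q| ≤ C2 := by
    rw [hQ, hC2]
    have htabs : |t| ≤ 1 := by rw [abs_of_pos htpos]; exact htle1
    calc |4 * A2 * (x+1)^2 - 24 * A3 * x^2 * (x+1) + 24 * A3 * x * (x+1)^2 * t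
        - 8 * A3 * (x+1)^3 * t^2|
        ≤ |4 * A2 * (x+1)^2 - 24 * A3 * x^2 * (x+1)| + |24 * A3 * x * (x+1)^2 * t|
          + |8 * A3 * (x+1)^3 * t^2| := by
          apply (abs_sub _ _).trans
          gcongr
          exact abs_add_le _ _
      _ ≤ |4 * A2 * (x+1)^2 - 24 * A3 * x^2 * (x+1)| + |24 * A3 * x * (x+1)^2|
          + |8 * A3 * (x+1)^3| := by
          have e1 : |24 * A3 * x * (x+1)^2 * t| ≤ |24 * A3 * x * (x+1)^2| := by
            rw [abs_mul]; exact mul_le_of_le_one_right (abs_nonneg _) htabs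
          have e2 : |8 * A3 * (x+1)^3 * t^2| ≤ |8 * A3 * (x+1)^3| := by
            rw [abs_mul]
            apply mul_le_of_le_one_right (abs_nonneg _)
            rw [abs_pow]
            exact pow_le_one₀ (abs_nonneg t) htabs
          linarith
  have hu4 : u ^ 4 ≤ M0 ^ 4 * t ^ 4 := by
    have h1 : |u| ^ 4 ≤ (M0 * t) ^ 4 := pow_le_pow_left₀ (abs_nonneg u) huM 4
    have h2 : |u| ^ 4 = u ^ 4 := by rw [← abs_pow]; exact abs_of_nonneg (by positivity)
    rw [h2] at h1; nlinarith [h1]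
  have h84 : t ^ 4 = 1 / (b n) ^ 8 := by
    rw [ht, div_pow, one_pow]
    congr 1
    ring
  have hCB : (C0 * M0 ^ 4 + C2 + 1) / (b n) ^ 8 = (C0 * M0 ^ 4 + C2 + 1) * t ^ 4 := by
    rw [h84, mul_one_div]
  rw [hCB]
  have h4pos : (0:ℝ) < t ^ 4 := pow_pos htpos 4
  calc |(1 + u) ^ (α/2 : ℝ) - T|
      ≤ |(1 + u) ^ (α/2 : ℝ) - (1 + β * u + A2 * u ^ 2 + A3 * u ^ 3)|
        + |(1 + β * u + A2 * u ^ 2 + A3 * u ^ 3) - T| :=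
        abs_sub_le _ _ _
    _ ≤ C0 * u ^ 4 + t ^ 4 * C2 := by
        refine add_le_add hmain ?_
        rw [hid, abs_mul, abs_of_nonneg (by positivity : (0:ℝ) ≤ t^4)]
        exact mul_le_mul_of_nonneg_left hQb (by positivity)
    _ ≤ C0 * (M0 ^ 4 * t ^ 4) + t ^ 4 * C2 :=
        add_le_add_left (mul_le_mul_of_nonneg_left hu4 hC0.le) _
    _ ≤ (C0 * M0 ^ 4 + C2 + 1) * t ^ 4 := by
        have heq : C0 * (M0 ^ 4 * t ^ 4) + t ^ 4 * C2 = (C0 * M0 ^ 4 + C2) * t ^ 4 := by ring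
        rw [heq]
        have : (C0 * M0 ^ 4 + C2) ≤ (C0 * M0 ^ 4 + C2 + 1) := by linarith
        exact mul_le_mul_of_nonneg_right this h4pos.le
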